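/- arXiv:1707.08762 — 5 statements merged into one kernel-verified Lean document; each statement's English description precedes it below -/
import Mathlib

section
/- In a topological argumentation model, the grounded extension is upward closed: if f ∈ LFP_τ and f' ∈ τ with f ⊆ f', then f' ∈ LFP_τ. -/
variable {X : Type*} [TopologicalSpace X]

/-- The set of opens defended by the family `T` of opens
(`atk t t'` reads "t' attacks t"). -/
def defends (atk : Set X → Set X → Prop) (T : Set (Set X)) : Set (Set X) :=
  {t | IsOpen t ∧ ∀ t', IsOpen t' → atk t t' → ∃ t'' ∈ T, atk t' t''}

/-- The grounded extension `LFP_τ`: the least fixed point of the defense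
function, constructed as the intersection of all prefixed points. -/
def groundedExt (atk : Set X → Set X → Prop) : Set (Set X) :=
  ⋂₀ {T : Set (Set X) | defends atk T ⊆ T}

/-- Grounded belief: some member of the grounded extension supports `P`. -/
def GroundedBelief (atk : Set X → Set X → Prop) (P : Set X) : Prop :=
  ∃ f ∈ groundedExt atk, f ⊆ P

lemma defends_mono (atk : Set X → Set X → Prop) {T T' : Set (Set X)} (h : T ⊆ T') :
    defends atk T ⊆ defends atk T' := by
  rintro t ⟨ht, hd⟩
  exact ⟨ht, fun t' ho ha => by
    obtain ⟨t'', ht'', ha'⟩ := hd t' ho ha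
    exact ⟨t'', h ht'', ha'⟩⟩

lemma groundedExt_prefixed (atk : Set X → Set X → Prop) :
    defends atk (groundedExt atk) ⊆ groundedExt atk := by
  intro t ht T hT
  exact hT (defends_mono atk (Set.sInter_subset_of_mem hT) ht)

lemma groundedExt_fixed (atk : Set X → Set X → Prop) :
    groundedExt atk ⊆ defends atk (groundedExt atk) := by
  intro t ht
  exact ht _ (defends_mono atk (groundedExt_prefixed atk))

/-- The grounded extension is upward closed among opens. -/
theorem groundedExt_upward_closed (atk : Set X → Set X → Prop)
    (h1 : ∀ t₁ t₂ : Set X, IsOpen t₁ → IsOpen t₂ → (t₁ ∩ t₂ = ∅ ↔ atk t₁ t₂ ∨ atk t₂ t₁))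
    (h2 : ∀ t t₁ t₁' : Set X, IsOpen t → IsOpen t₁ → IsOpen t₁' → atk t₁ t → t₁' ⊆ t₁ → atk t₁' t)
    (h3 : ∀ t : Set X, IsOpen t → t ≠ ∅ → atk ∅ t ∧ ¬ atk t ∅) :
    ∀ f f' : Set X, f ∈ groundedExt atk → IsOpen f' → f ⊆ f' →
      f' ∈ groundedExt atk := by
  intro f f' hf hf' hsub
  have hfd : f ∈ defends atk (groundedExt atk) := groundedExt_fixed atk hf
  obtain ⟨hfo, hdef⟩ := hfd
  apply groundedExt_prefixed atk
  refine ⟨hf', fun t' ht'o hatk => ?_⟩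
  -- t' attacks f', so f' ∩ t' = ∅, hence f ∩ t' = ∅
  have hdisj : f' ∩ t' = ∅ := (h1 f' t' hf' ht'o).2 (Or.inl hatk)
  have hdisj' : f ∩ t' = ∅ := by
    apply Set.eq_empty_of_subset_empty
    rw [← hdisj]
    exact Set.inter_subset_inter_left _ hsub
  rcases (h1 f t' hfo ht'o).1 hdisj' with h | h
  · exact hdef t' ht'o h
  · exact ⟨f, hf, h⟩
end

section
/- Grounded belief is consistent: in a topological argumentation model, the agent never believes the empty proposition, i.e., ∅ ∉ LFP_τ and hence ¬B ∅. Equivalently, B P implies ¬B (X \ P). -/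
variable {X : Type*} [TopologicalSpace X]

lemma groundedExt_le (atk : Set X → Set X → Prop) {T : Set (Set X)}
    (h : defends atk T ⊆ T) : groundedExt atk ⊆ T :=
  fun _ hf => hf T h

/-- Grounded belief is consistent: the empty proposition is never believed,
and believing P precludes believing its complement. -/
theorem groundedBelief_consistent (atk : Set X → Set X → Prop)
    (h1 : ∀ t₁ t₂ : Set X, IsOpen t₁ → IsOpen t₂ → (t₁ ∩ t₂ = ∅ ↔ atk t₁ t₂ ∨ atk t₂ t₁))
    (h2 : ∀ t t₁ t₁' : Set X, IsOpen t → IsOpen t₁ → IsOpen t₁' → atk t₁ t → t₁' ⊆ t₁ → atk t₁' t)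
    (h3 : ∀ t : Set X, IsOpen t → t ≠ ∅ → atk ∅ t ∧ ¬ atk t ∅) :
    ∅ ∉ groundedExt atk ∧ ¬ GroundedBelief atk ∅ ∧
    (∀ P : Set X, GroundedBelief atk P → ¬ GroundedBelief atk Pᶜ) := by
  -- every member of the grounded extension is open
  have hopen : ∀ f ∈ groundedExt atk, IsOpen f := fun f hf =>
    (groundedExt_fixed atk hf).1
  -- univ attacks ∅ (either by h3, or, if univ = ∅, because atk ∅ ∅ holds by h1)
  have hatk_univ : atk (∅ : Set X) Set.univ := by
    by_cases hu : (Set.univ : Set X) = ∅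
    · have := (h1 ∅ ∅ isOpen_empty isOpen_empty).1 (by simp)
      rw [hu]; tauto
    · exact (h3 Set.univ isOpen_univ hu).1
  -- the prefixed point of nonempty opens
  have hT : defends atk {t : Set X | IsOpen t ∧ t ≠ ∅} ⊆ {t : Set X | IsOpen t ∧ t ≠ ∅} := by
    rintro t ⟨ht, hd⟩
    refine ⟨ht, ?_⟩
    rintro rfl
    obtain ⟨t'', ⟨ht'', hne⟩, ha⟩ := hd Set.univ isOpen_univ hatk_univ
    have : (Set.univ : Set X) ∩ t'' = ∅ := (h1 _ _ isOpen_univ ht'').2 (Or.inl ha)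
    simp at this
    exact hne this
  have hempty : ∅ ∉ groundedExt atk := by
    intro h
    exact (groundedExt_le atk hT h).2 rfl
  -- conflict-freeness: no member of groundedExt attacks another
  have hcf : ∀ s ∈ groundedExt atk, ∀ v ∈ groundedExt atk, ¬ atk s v := by
    set G := groundedExt atk with hG
    have hC : defends atk {t ∈ G | ∀ s ∈ G, ¬ atk s t} ⊆ {t ∈ G | ∀ s ∈ G, ¬ atk s t} := by
      intro t ht
      have htG : t ∈ G := groundedExt_prefixed atk
        (defends_mono atk (fun x hx => hx.1) ht)
      refine ⟨htG, ?_⟩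
      intro s hsG hatk
      -- s ∈ G = defends G, attacker t, so some u ∈ G attacks t
      obtain ⟨u, huG, hau⟩ := (groundedExt_fixed atk hsG).2 t ht.1 hatk
      -- t ∈ defends C, attacker u, so some v ∈ C attacks u
      obtain ⟨v, hvC, hav⟩ := ht.2 u (hopen u huG) hau
      exact hvC.2 u huG hav
    intro s hs v hv hatk
    exact (groundedExt_le atk hC hv).2 s hs hatk
  refine ⟨hempty, ?_, ?_⟩
  · rintro ⟨f, hf, hsub⟩
    exact hempty (Set.subset_empty_iff.1 hsub ▸ hf)
  · rintro P ⟨f, hf, hfP⟩ ⟨g, hg, hgP⟩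
    have hdisj : f ∩ g = ∅ := by
      apply Set.eq_empty_iff_forall_notMem.2
      rintro x ⟨hxf, hxg⟩
      exact hgP hxg (hfP hxf)
    rcases (h1 f g (hopen f hf) (hopen g hg)).1 hdisj with h | h
    · exact hcf f hf g hg h
    · exact hcf g hg f hf h
end

section
/- In any topological argumentation model, every open set consistent with all finite combined evidence is defended by the empty set, i.e., J := {t ∈ τ ∣ ∀e ∈ E, e ∩ t ≠ ∅} satisfies J ⊆ d(∅); consequently J ⊆ LFP_τ, and evidence-based belief implies grounded belief. -/
variable {X : Type*} [TopologicalSpace X]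

/-- The combined evidence given by finite bodies of evidence: non-empty
intersections of finite subfamilies of the basic evidence `E₀`. -/
def combinedEvidence (E₀ : Set (Set X)) : Set (Set X) :=
  {e | e ≠ ∅ ∧ ∃ F : Set (Set X), F.Finite ∧ F ⊆ E₀ ∧ e = ⋂₀ F}

/-- Every open consistent with all finite combined evidence is defended by
the empty set; consequently it lies in the grounded extension, and
evidence-based belief implies grounded belief. -/
theorem J_subset_defends_empty (E₀ : Set (Set X)) (atk : Set X → Set X → Prop)
    (hE₀ : ∅ ∉ E₀) (hXE₀ : Set.univ ∈ E₀)
    (hgen : ‹TopologicalSpace X› = TopologicalSpace.generateFrom E₀)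
    (h1 : ∀ t₁ t₂ : Set X, IsOpen t₁ → IsOpen t₂ → (t₁ ∩ t₂ = ∅ ↔ atk t₁ t₂ ∨ atk t₂ t₁))
    (h2 : ∀ t t₁ t₁' : Set X, IsOpen t → IsOpen t₁ → IsOpen t₁' → atk t₁ t → t₁' ⊆ t₁ → atk t₁' t)
    (h3 : ∀ t : Set X, IsOpen t → t ≠ ∅ → atk ∅ t ∧ ¬ atk t ∅) :
    {t : Set X | IsOpen t ∧ ∀ e ∈ combinedEvidence E₀, e ∩ t ≠ ∅} ⊆
      defends atk ∅ ∧
    {t : Set X | IsOpen t ∧ ∀ e ∈ combinedEvidence E₀, e ∩ t ≠ ∅} ⊆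
      groundedExt atk ∧
    (∀ P : Set X,
      (∃ t : Set X, IsOpen t ∧ t ⊆ P ∧ ∀ e ∈ combinedEvidence E₀, t ∩ e ≠ ∅) →
      GroundedBelief atk P) := by
  have key : {t : Set X | IsOpen t ∧ ∀ e ∈ combinedEvidence E₀, e ∩ t ≠ ∅} ⊆
      defends atk ∅ := by
    rintro t ⟨ht, hmeet⟩
    have htne : t ≠ ∅ := by
      intro h
      exact hmeet Set.univ ⟨fun h => hE₀ (h ▸ hXE₀),
        {Set.univ}, Set.finite_singleton _, Set.singleton_subset_iff.mpr hXE₀,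
        by simp⟩ (by simp [h])
    refine ⟨ht, fun t' ht' hatk => ?_⟩
    exfalso
    have hdisj : t ∩ t' = ∅ := (h1 t t' ht ht').mpr (Or.inl hatk)
    rcases eq_or_ne t' ∅ with h | h
    · exact (h3 t ht htne).2 (h ▸ hatk)
    · -- t' nonempty open, contains a basic open = finite intersection of E₀
      obtain ⟨x, hx⟩ := Set.nonempty_iff_ne_empty.mpr h
      have hbasis := TopologicalSpace.isTopologicalBasis_of_subbasis hgen
      obtain ⟨b, hbmem, hxb, hbsub⟩ :=
        hbasis.exists_subset_of_mem_open hx ht'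
      obtain ⟨F, ⟨hFfin, hFsub⟩, rfl⟩ := hbmem
      have hce : ⋂₀ F ∈ combinedEvidence E₀ :=
        ⟨Set.nonempty_iff_ne_empty.mp ⟨x, hxb⟩, F, hFfin, hFsub, rfl⟩
      obtain ⟨y, hy⟩ := Set.nonempty_iff_ne_empty.mpr (hmeet _ hce)
      exact Set.eq_empty_iff_forall_notMem.mp hdisj y ⟨hy.2, hbsub hy.1⟩
  have mono : ∀ T : Set (Set X), defends atk ∅ ⊆ defends atk T := by
    rintro T t ⟨ht, hd⟩
    exact ⟨ht, fun t' ht' ha => absurd (hd t' ht' ha) (by simp)⟩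
  have key2 : {t : Set X | IsOpen t ∧ ∀ e ∈ combinedEvidence E₀, e ∩ t ≠ ∅} ⊆
      groundedExt atk := by
    intro t ht T hT
    exact hT (mono T (key ht))
  refine ⟨key, key2, fun P ⟨t, ht, htP, hm⟩ => ?_⟩
  exact ⟨t, key2 ⟨ht, fun e he => by rw [Set.inter_comm]; exact hm e he⟩, htP⟩
end

section
/- Grounded belief is not closed under conjunction: there exists a topological argumentation model (on the three-point set X = {1,2,3} with the discrete topology) whose grounded extension is {{1,2}, {2,3}, {1,2,3}}, so that B {1,2} and B {2,3} hold but B {2} fails. -/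
variable {X : Type*} [TopologicalSpace X]

/-- The concrete attack relation: `myatk a b` reads "`b` attacks `a`". -/
def myatk (a b : Set (Fin 3)) : Prop :=
  a = ∅ ∨ (b ≠ ∅ ∧ a ∩ b = ∅ ∧ ¬(b = {2} ∧ a = ({0, 1} : Set (Fin 3))) ∧
    ¬(b = {0} ∧ a = ({1, 2} : Set (Fin 3))))

lemma ne01 : (({0, 1} : Set (Fin 3))) ≠ ∅ := by
  intro h
  have : (0 : Fin 3) ∈ ({0, 1} : Set (Fin 3)) := by simp
  rw [h] at this; exact this

lemma ne12 : (({1, 2} : Set (Fin 3))) ≠ ∅ := by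
  intro h
  have : (1 : Fin 3) ∈ ({1, 2} : Set (Fin 3)) := by simp
  rw [h] at this; exact this

lemma subset_eq01 {s : Set (Fin 3)} (h01 : ({0, 1} : Set (Fin 3)) ⊆ s)
    (h2 : (2 : Fin 3) ∉ s) : s = ({0, 1} : Set (Fin 3)) := by
  ext x
  fin_cases x
  · simp only [Set.mem_insert_iff, Set.mem_singleton_iff]
    exact ⟨fun _ => Or.inl rfl, fun _ => h01 (by simp)⟩
  · simp only [Set.mem_insert_iff, Set.mem_singleton_iff]
    exact ⟨fun _ => Or.inr rfl, fun _ => h01 (by simp)⟩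
  · simp only [Set.mem_insert_iff, Set.mem_singleton_iff]
    constructor
    · intro h; exact absurd h h2
    · intro h; exact absurd h (by decide)

lemma subset_eq12 {s : Set (Fin 3)} (h12 : ({1, 2} : Set (Fin 3)) ⊆ s)
    (h0 : (0 : Fin 3) ∉ s) : s = ({1, 2} : Set (Fin 3)) := by
  ext x
  fin_cases x
  · constructor
    · intro h; exact absurd h h0
    · intro h; exact absurd h (by decide)
  · exact ⟨fun _ => by simp, fun _ => h12 (by simp)⟩
  · exact ⟨fun _ => by simp, fun _ => h12 (by simp)⟩

/-- A nonempty subset of `Fin 3` avoiding `0` and `1` is `{2}`. -/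
lemma eq_s2 {s : Set (Fin 3)} (hne : s ≠ ∅) (h0 : (0 : Fin 3) ∉ s)
    (h1 : (1 : Fin 3) ∉ s) : s = ({2} : Set (Fin 3)) := by
  obtain ⟨x, hx⟩ := Set.nonempty_iff_ne_empty.2 hne
  have hx2 : x = 2 := by fin_cases x <;> first | exact absurd hx h0 | exact absurd hx h1 | rfl
  subst hx2
  ext y
  fin_cases y
  · exact ⟨fun h => absurd h h0, fun h => absurd h (by decide)⟩
  · exact ⟨fun h => absurd h h1, fun h => absurd h (by decide)⟩
  · exact ⟨fun _ => rfl, fun _ => hx⟩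

lemma eq_s0 {s : Set (Fin 3)} (hne : s ≠ ∅) (h1 : (1 : Fin 3) ∉ s)
    (h2 : (2 : Fin 3) ∉ s) : s = ({0} : Set (Fin 3)) := by
  obtain ⟨x, hx⟩ := Set.nonempty_iff_ne_empty.2 hne
  have hx0 : x = 0 := by fin_cases x <;> first | rfl | exact absurd hx h1 | exact absurd hx h2
  subst hx0
  ext y
  fin_cases y
  · exact ⟨fun _ => rfl, fun _ => hx⟩
  · exact ⟨fun h => absurd h h1, fun h => absurd h (by decide)⟩
  · exact ⟨fun h => absurd h h2, fun h => absurd h (by decide)⟩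

lemma disj_mem {a b : Set (Fin 3)} (h : a ∩ b = ∅) {x : Fin 3} (hx : x ∈ a) : x ∉ b := by
  intro hxb
  have : x ∈ a ∩ b := ⟨hx, hxb⟩
  rw [h] at this; exact this

/-- Grounded belief is not closed under conjunction: a three-point
counterexample with the discrete topology. -/
theorem groundedBelief_not_closed_under_conjunction :
    letI : TopologicalSpace (Fin 3) := ⊥
    ∃ atk : Set (Fin 3) → Set (Fin 3) → Prop,
      (∀ t₁ t₂ : Set (Fin 3), IsOpen t₁ → IsOpen t₂ →
        (t₁ ∩ t₂ = ∅ ↔ atk t₁ t₂ ∨ atk t₂ t₁)) ∧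
      (∀ t t₁ t₁' : Set (Fin 3), IsOpen t → IsOpen t₁ → IsOpen t₁' →
        atk t₁ t → t₁' ⊆ t₁ → atk t₁' t) ∧
      (∀ t : Set (Fin 3), IsOpen t → t ≠ ∅ → atk ∅ t ∧ ¬ atk t ∅) ∧
      groundedExt atk =
        {({0, 1} : Set (Fin 3)), ({1, 2} : Set (Fin 3)), Set.univ} ∧
      GroundedBelief atk ({0, 1} : Set (Fin 3)) ∧
      GroundedBelief atk ({1, 2} : Set (Fin 3)) ∧
      ¬ GroundedBelief atk ({1} : Set (Fin 3)) := by
  haveI : DiscreteTopology (Fin 3) := ⟨rfl⟩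
  have hop : ∀ s : Set (Fin 3), IsOpen s := fun s => isOpen_discrete s
  refine ⟨myatk, ?_, ?_, ?_, ?_⟩
  · -- condition (1)
    intro t₁ t₂ _ _
    constructor
    · intro hdisj
      by_cases h1 : t₁ = ∅
      · exact Or.inl (Or.inl h1)
      by_cases h2 : t₂ = ∅
      · exact Or.inr (Or.inl h2)
      by_cases hx : t₂ = ({2} : Set (Fin 3)) ∧ t₁ = ({0, 1} : Set (Fin 3))
      · -- excluded direction; use the other one
        refine Or.inr (Or.inr ⟨h1, by rw [Set.inter_comm]; exact hdisj, ?_, ?_⟩)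
        · rintro ⟨ha, hb⟩; rw [hx.2] at ha
          exact absurd (ha ▸ (show (0:Fin 3) ∈ ({0,1}:Set (Fin 3)) by simp)) (by decide)
        · rintro ⟨ha, hb⟩; rw [hx.2] at ha
          exact absurd (ha ▸ (show (1:Fin 3) ∈ ({0,1}:Set (Fin 3)) by simp)) (by decide)
      by_cases hy : t₂ = ({0} : Set (Fin 3)) ∧ t₁ = ({1, 2} : Set (Fin 3))
      · refine Or.inr (Or.inr ⟨h1, by rw [Set.inter_comm]; exact hdisj, ?_, ?_⟩)
        · rintro ⟨ha, hb⟩; rw [hy.2] at ha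
          exact absurd (ha ▸ (show (1:Fin 3) ∈ ({1,2}:Set (Fin 3)) by simp)) (by decide)
        · rintro ⟨ha, hb⟩; rw [hy.2] at ha
          exact absurd (ha ▸ (show (2:Fin 3) ∈ ({1,2}:Set (Fin 3)) by simp)) (by decide)
      · exact Or.inl (Or.inr ⟨h2, hdisj, fun h => hx h, fun h => hy h⟩)
    · rintro (h | h)
      · rcases h with h | ⟨_, h, _, _⟩
        · rw [h]; exact Set.empty_inter t₂
        · exact h
      · rcases h with h | ⟨_, h, _, _⟩
        · rw [h]; exact Set.inter_empty t₁
        · rw [Set.inter_comm]; exact h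
  · -- condition (2): attacked-side subset closure
    intro t t₁ t₁' _ _ _ hatk hsub
    rcases hatk with h | ⟨hne, hdisj, hex1, hex2⟩
    · left; exact Set.subset_eq_empty hsub h
    by_cases h' : t₁' = ∅
    · exact Or.inl h'
    refine Or.inr ⟨hne, Set.subset_eq_empty (Set.inter_subset_inter_left t hsub) hdisj, ?_, ?_⟩
    · rintro ⟨ht2, ht01⟩
      apply hex1
      refine ⟨ht2, ?_⟩
      apply subset_eq01 (ht01 ▸ hsub)
      intro h2mem
      exact disj_mem hdisj h2mem (by rw [ht2]; rfl)
    · rintro ⟨ht0, ht12⟩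
      apply hex2
      refine ⟨ht0, ?_⟩
      apply subset_eq12 (ht12 ▸ hsub)
      intro h0mem
      exact disj_mem hdisj h0mem (by rw [ht0]; rfl)
  · -- condition (3)
    intro t _ hne
    constructor
    · exact Or.inl rfl
    · rintro (h | ⟨hne', _, _, _⟩)
      · exact hne h
      · exact hne' rfl
  · -- the grounded extension
    have hg : groundedExt myatk =
        ({({0, 1} : Set (Fin 3)), ({1, 2} : Set (Fin 3)), Set.univ} : Set (Set (Fin 3))) := by
      apply Set.Subset.antisymm
      · -- groundedExt ⊆ E since E is a prefixed point
        apply Set.sInter_subset_of_mem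
        intro t ht
        obtain ⟨_, hdef⟩ := ht
        by_cases h1 : (1 : Fin 3) ∈ t
        · by_cases h0 : (0 : Fin 3) ∈ t <;> by_cases h2 : (2 : Fin 3) ∈ t
          · -- t = univ
            right; right
            have : t = Set.univ := Set.eq_univ_of_forall (fun x => by
              fin_cases x <;> assumption)
            simpa using this
          · -- t = {0,1}
            left
            ext x
            fin_cases x
            · simpa using h0
            · simpa using h1
            · simp only [Set.mem_insert_iff, Set.mem_singleton_iff]
              exact ⟨fun h => absurd h h2, fun h => absurd h (by decide)⟩
          · -- t = {1,2}
            right; left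
            ext x
            fin_cases x
            · simp only [Set.mem_insert_iff, Set.mem_singleton_iff]
              exact ⟨fun h => absurd h h0, fun h => absurd h (by decide)⟩
            · simpa using h1
            · simpa using h2
          · -- t = {1}: defended claim yields contradiction
            exfalso
            have hatk : myatk t ({0, 2} : Set (Fin 3)) := by
              refine Or.inr ⟨?_, ?_, ?_, ?_⟩
              · intro h
                have : (0 : Fin 3) ∈ ({0, 2} : Set (Fin 3)) := by simp
                rw [h] at this; exact this
              · ext x
                simp only [Set.mem_inter_iff, Set.mem_empty_iff_false, iff_false]
                rintro ⟨hxt, hx02⟩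
                fin_cases x
                · exact h0 hxt
                · revert hx02; decide
                · exact h2 hxt
              · rintro ⟨h, _⟩
                exact absurd (h ▸ (show (0:Fin 3) ∈ ({0,2}:Set (Fin 3)) by simp)) (by decide)
              · rintro ⟨h, _⟩
                exact absurd (h ▸ (show (2:Fin 3) ∈ ({0,2}:Set (Fin 3)) by simp)) (by decide)
            obtain ⟨t'', ht''E, hatk'⟩ := hdef _ (hop _) hatk
            rcases hatk' with h | ⟨_, hdisj, _, _⟩
            · exact absurd (h ▸ (show (0:Fin 3) ∈ ({0,2}:Set (Fin 3)) by simp)) (by simp)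
            · rcases ht''E with h | h | h
              · exact disj_mem hdisj (show (0:Fin 3) ∈ ({0,2}:Set (Fin 3)) by simp)
                  (by rw [h]; simp)
              · exact disj_mem hdisj (show (2:Fin 3) ∈ ({0,2}:Set (Fin 3)) by simp)
                  (by rw [h]; simp)
              · exact disj_mem hdisj (show (0:Fin 3) ∈ ({0,2}:Set (Fin 3)) by simp)
                  (by rw [h]; simp)
        · -- 1 ∉ t : attacker {1} is not counterattacked by E
          exfalso
          have hatk : myatk t ({1} : Set (Fin 3)) := by
            refine Or.inr ⟨?_, ?_, ?_, ?_⟩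
            · intro h
              have : (1 : Fin 3) ∈ ({1} : Set (Fin 3)) := rfl
              rw [h] at this; exact this
            · ext x
              simp only [Set.mem_inter_iff, Set.mem_empty_iff_false, iff_false]
              rintro ⟨hxt, hx1⟩
              have : x = 1 := hx1
              exact h1 (this ▸ hxt)
            · rintro ⟨h, _⟩
              exact absurd (h ▸ (show (1:Fin 3) ∈ ({1}:Set (Fin 3)) from rfl)) (by decide)
            · rintro ⟨h, _⟩
              exact absurd (h ▸ (show (1:Fin 3) ∈ ({1}:Set (Fin 3)) from rfl)) (by decide)
          obtain ⟨t'', ht''E, hatk'⟩ := hdef _ (hop _) hatk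
          rcases hatk' with h | ⟨_, hdisj, _, _⟩
          · exact absurd (h ▸ (show (1:Fin 3) ∈ ({1}:Set (Fin 3)) from rfl)) (by simp)
          · rcases ht''E with h | h | h
            · exact disj_mem hdisj (show (1:Fin 3) ∈ ({1}:Set (Fin 3)) from rfl)
                (by rw [h]; simp)
            · exact disj_mem hdisj (show (1:Fin 3) ∈ ({1}:Set (Fin 3)) from rfl)
                (by rw [h]; simp)
            · exact disj_mem hdisj (show (1:Fin 3) ∈ ({1}:Set (Fin 3)) from rfl)
                (by rw [h]; simp)
      · -- E ⊆ every prefixed point: members of E are unattacked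
        intro e he
        intro T hT
        apply hT
        refine ⟨hop _, ?_⟩
        intro t' _ hatk
        exfalso
        rcases he with h | h | h
        · subst h
          rcases hatk with h' | ⟨hne, hdisj, hex1, _⟩
          · exact ne01 h'
          · apply hex1
            refine ⟨?_, rfl⟩
            apply eq_s2 hne
            · exact fun h0 => disj_mem hdisj (show (0:Fin 3) ∈ ({0,1}:Set (Fin 3)) by simp) h0
            · exact fun h1 => disj_mem hdisj (show (1:Fin 3) ∈ ({0,1}:Set (Fin 3)) by simp) h1
        · subst h
          rcases hatk with h' | ⟨hne, hdisj, _, hex2⟩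
          · exact ne12 h'
          · apply hex2
            refine ⟨?_, rfl⟩
            apply eq_s0 hne
            · exact fun h1 => disj_mem hdisj (show (1:Fin 3) ∈ ({1,2}:Set (Fin 3)) by simp) h1
            · exact fun h2 => disj_mem hdisj (show (2:Fin 3) ∈ ({1,2}:Set (Fin 3)) by simp) h2
        · subst h
          rcases hatk with h' | ⟨hne, hdisj, _, _⟩
          · exact (Set.univ_nonempty.ne_empty) h'
          · apply hne
            rw [Set.univ_inter] at hdisj
            exact hdisj
    refine ⟨hg, ?_, ?_, ?_⟩
    · exact ⟨({0, 1} : Set (Fin 3)), by rw [hg]; left; rfl, subset_rfl⟩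
    · exact ⟨({1, 2} : Set (Fin 3)), by rw [hg]; right; left; rfl, subset_rfl⟩
    · rintro ⟨f, hf, hsub⟩
      rw [hg] at hf
      rcases hf with h | h | h
      · subst h
        exact absurd (hsub (show (0:Fin 3) ∈ ({0,1}:Set (Fin 3)) by simp)) (by decide)
      · subst h
        exact absurd (hsub (show (2:Fin 3) ∈ ({1,2}:Set (Fin 3)) by simp)) (by decide)
      · subst h
        exact absurd (hsub (Set.mem_univ 0)) (by decide)
end

section
/- For the topological argumentation model constructed from a belief neighborhood model (X, N) (with τ = 2^X and t ⤙ t' iff t' ≠ ∅, t ∩ t' = ∅, t ∉ N, plus ∅ attacked by everything), the grounded extension equals N: LFP_τ = N. -/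
variable {X : Type*} [TopologicalSpace X]

/-- The attack relation induced by a belief neighborhood `N` on `τ = 2^X`. -/
def nbAttack {Y : Type*} (N : Set (Set Y)) (t t' : Set Y) : Prop :=
  (t' ≠ ∅ ∧ t ∩ t' = ∅ ∧ t ∉ N) ∨ (t' = ∅ ∧ t = ∅)

/-- In the topological argumentation model built from a belief neighborhood
model (discrete topology, induced attack relation), the grounded extension
equals the neighborhood family. -/
theorem groundedExt_eq_neighborhood {Y : Type*} (N : Set (Set Y))
    (hX : Set.univ ∈ N)
    (hsup : ∀ b b' : Set Y, b ∈ N → b ⊆ b' → b' ∈ N)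
    (hcomp : ∀ b : Set Y, b ∈ N → bᶜ ∉ N) :
    letI : TopologicalSpace Y := ⊥
    groundedExt (nbAttack N) = N := by
  letI : TopologicalSpace Y := ⊥
  haveI : DiscreteTopology Y := ⟨rfl⟩
  have hempty : (∅ : Set Y) ∉ N := fun h => hcomp ∅ h (by simpa using hX)
  apply Set.Subset.antisymm
  · -- groundedExt ⊆ N : N is a prefixed point
    apply Set.sInter_subset_of_mem
    intro t ht
    by_contra htN
    obtain ⟨-, hdef⟩ := ht
    set s : Set Y := (⋃₀ N) \ t with hs
    have hsne : s ≠ ∅ := by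
      intro h
      apply htN
      apply hsup Set.univ t hX
      intro x _
      by_contra hxt
      have hxs : x ∈ s := ⟨⟨Set.univ, hX, trivial⟩, hxt⟩
      simp [h] at hxs
    have hatke : nbAttack N t s :=
      Or.inl ⟨hsne, Set.inter_diff_self _ _, htN⟩
    obtain ⟨t'', ht''N, hatk⟩ := hdef s (isOpen_discrete s) hatke
    rcases hatk with ⟨hne, hdisj, hsN⟩ | ⟨h1, h2⟩
    · apply htN
      apply hsup t'' t ht''N
      intro x hxt''
      by_contra hxt
      have hxs : x ∈ s := ⟨⟨t'', ht''N, hxt''⟩, hxt⟩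
      have : x ∈ s ∩ t'' := ⟨hxs, hxt''⟩
      rw [hdisj] at this
      exact this
    · exact hsne h2
  · -- N ⊆ groundedExt : members of N are unattacked
    intro b hb
    rw [groundedExt, Set.mem_sInter]
    intro T hT
    apply hT
    refine ⟨isOpen_discrete b, ?_⟩
    intro t' _ hatk
    exfalso
    rcases hatk with ⟨_, _, hbN⟩ | ⟨_, hb0⟩
    · exact hbN hb
    · exact hempty (hb0 ▸ hb)
end
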